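/- Let E be a real inner product space, m ≥ 1, α > 0, and let z_1, …, z_m ∈ E be unit vectors (‖z_i‖ = 1 for all i). Then ∑_{i=1}^m (1/α)·log(1 + ∑_{j≠i} exp(−α(⟪z_i, z_j⟫ − 1))) ≥ (m/α)·log m + (1/(2m)) ∑_{i=1}^m ∑_{j=1}^m ‖z_i − z_j‖². (This is the precise form of the claim that the tightness term of the Multi-Similarity loss with margin 1 is bounded below, up to multiplicative and additive constants, by the tightness term of contrastive loss.) -/

import Mathlib

open scoped RealInnerProductSpace
open Finset Real

lemma lse_aux {ι : Type*} (s : Finset ι) (f : ι → ℝ) :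
    (s.card : ℝ) * Real.exp ((∑ j ∈ s, f j) / s.card) ≤ ∑ j ∈ s, Real.exp (f j) := by
  rcases s.eq_empty_or_nonempty with rfl | hs
  · simp
  · have hc : (0 : ℝ) < s.card := by exact_mod_cast Finset.card_pos.mpr hs
    set c : ℝ := (∑ j ∈ s, f j) / s.card with hcdef
    have hle : ∀ j ∈ s, Real.exp c * (1 + (f j - c)) ≤ Real.exp (f j) := by
      intro j _
      have h1 : 1 + (f j - c) ≤ Real.exp (f j - c) := by
        linarith [Real.add_one_le_exp (f j - c)]
      calc Real.exp c * (1 + (f j - c)) ≤ Real.exp c * Real.exp (f j - c) :=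
            mul_le_mul_of_nonneg_left h1 (Real.exp_pos c).le
        _ = Real.exp (f j) := by rw [← Real.exp_add]; ring_nf
    calc (s.card : ℝ) * Real.exp c = ∑ j ∈ s, Real.exp c * (1 + (f j - c)) := by
          rw [← Finset.mul_sum]
          have h2 : ∑ j ∈ s, (1 + (f j - c)) = (s.card : ℝ) := by
            rw [Finset.sum_add_distrib, Finset.sum_sub_distrib, Finset.sum_const,
              Finset.sum_const, hcdef]
            simp only [nsmul_eq_mul, mul_one]
            field_simp
            ring
          rw [h2]; ring
      _ ≤ ∑ j ∈ s, Real.exp (f j) := Finset.sum_le_sum hle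

theorem ms_tightness_ge_contrastive_tightness
    {E : Type*} [NormedAddCommGroup E] [InnerProductSpace ℝ E]
    (m : ℕ) (hm : 1 ≤ m) (α : ℝ) (hα : 0 < α)
    (z : Fin m → E) (hz : ∀ i, ‖z i‖ = 1) :
    ∑ i, (1 / α) * Real.log (1 + ∑ j ∈ univ.erase i, Real.exp (-α * (⟪z i, z j⟫ - 1)))
      ≥ ((m : ℝ) / α) * Real.log (m : ℝ)
        + (1 / (2 * (m : ℝ))) * ∑ i, ∑ j, ‖z i - z j‖ ^ 2 := by
  have hm' : (0:ℝ) < m := by exact_mod_cast hm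
  have key : ∀ i : Fin m,
      (1 / α) * Real.log (1 + ∑ j ∈ univ.erase i, Real.exp (-α * (⟪z i, z j⟫ - 1)))
        ≥ (1 / α) * Real.log m + (1 / (2 * (m:ℝ))) * ∑ j, ‖z i - z j‖ ^ 2 := by
    intro i
    have hinner : ∀ j, -α * (⟪z i, z j⟫ - 1) = α * (‖z i - z j‖ ^ 2 / 2) := by
      intro j
      have h := @norm_sub_sq_real E _ _ (z i) (z j)
      rw [hz i, hz j] at h
      nlinarith [h]
    have hii : Real.exp (-α * (⟪z i, z i⟫ - 1)) = 1 := by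
      rw [hinner i]; simp
    have hsum : 1 + ∑ j ∈ univ.erase i, Real.exp (-α * (⟪z i, z j⟫ - 1))
        = ∑ j, Real.exp (-α * (⟪z i, z j⟫ - 1)) := by
      rw [← Finset.sum_erase_add univ _ (Finset.mem_univ i), hii]; ring
    rw [hsum]
    have hb := lse_aux (univ : Finset (Fin m)) (fun j => -α * (⟪z i, z j⟫ - 1))
    simp only [Finset.card_univ, Fintype.card_fin] at hb
    have hpos : (0:ℝ) < (m:ℝ) * Real.exp ((∑ j, -α * (⟪z i, z j⟫ - 1)) / m) :=
      mul_pos hm' (Real.exp_pos _)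
    have hlog : Real.log ((m:ℝ) * Real.exp ((∑ j, -α * (⟪z i, z j⟫ - 1)) / m))
        ≤ Real.log (∑ j, Real.exp (-α * (⟪z i, z j⟫ - 1))) :=
      Real.log_le_log hpos hb
    rw [Real.log_mul (ne_of_gt hm') (Real.exp_ne_zero _), Real.log_exp] at hlog
    have hsum2 : (∑ j, -α * (⟪z i, z j⟫ - 1)) = α * (∑ j, ‖z i - z j‖ ^ 2) / 2 := by
      rw [Finset.sum_congr rfl (fun j _ => hinner j)]
      rw [Finset.mul_sum, Finset.sum_div]
      exact Finset.sum_congr rfl (fun j _ => by ring)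
    rw [hsum2] at hlog
    have hmain : (1/α) * (Real.log m + α * (∑ j, ‖z i - z j‖ ^ 2) / 2 / m)
        ≤ (1/α) * Real.log (∑ j, Real.exp (-α * (⟪z i, z j⟫ - 1))) :=
      mul_le_mul_of_nonneg_left hlog (by positivity)
    refine le_trans (le_of_eq ?_) hmain
    field_simp
  calc ((m : ℝ) / α) * Real.log (m : ℝ)
        + (1 / (2 * (m : ℝ))) * ∑ i, ∑ j, ‖z i - z j‖ ^ 2
      = ∑ i : Fin m, ((1 / α) * Real.log m + (1 / (2 * (m:ℝ))) * ∑ j, ‖z i - z j‖ ^ 2) := by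
        rw [Finset.sum_add_distrib, Finset.sum_const, ← Finset.mul_sum]
        simp only [Finset.card_univ, Fintype.card_fin, nsmul_eq_mul]
        ring
    _ ≤ _ := Finset.sum_le_sum (fun i _ => key i)
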